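/- Let A be a unital C*-algebra and a ∈ A. Then for every nonzero complex number α: v(a)³ ≤ (1/|α|)·( max{1,|α−1|}·‖a‖³ + min{ v(a*a²), v(a²a*) } ). -/

import Mathlib

open scoped ComplexOrder

/-- A state on a unital `C*`-algebra: a positive linear functional `φ` (equivalently, since the
algebra is complete, `φ (star b * b) ≥ 0` for all `b`) with `φ 1 = 1`. -/
def IsState {A : Type*} [CStarAlgebra A] (φ : A →ₗ[ℂ] ℂ) : Prop :=
  (∀ b : A, 0 ≤ φ (star b * b)) ∧ φ 1 = 1

/-- The numerical radius of an element of a unital `C*`-algebra: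
`v(a) = sup { |φ(a)| : φ a state on A }`. -/
noncomputable def numRadius {A : Type*} [CStarAlgebra A] (a : A) : ℝ :=
  sSup {r : ℝ | ∃ φ : A →ₗ[ℂ] ℂ, IsState φ ∧ r = ‖φ a‖}

section Helpers

set_option linter.unusedSectionVars false

variable {A : Type*} [CStarAlgebra A] [Nontrivial A] {φ : A →ₗ[ℂ] ℂ}

lemma exists_sq (h : A) (hh : IsSelfAdjoint h) :
    ∃ c : A, algebraMap ℝ A ‖h‖ - h = star c * c := by
  refine ⟨cfc (fun x : ℝ => Real.sqrt (‖h‖ - x)) h, ?_⟩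
  have hc : IsSelfAdjoint (cfc (fun x : ℝ => Real.sqrt (‖h‖ - x)) h) := cfc_predicate _ h
  rw [hc.star_eq, ← cfc_mul _ _ h (by fun_prop) (by fun_prop)]
  have : cfc (fun x : ℝ => Real.sqrt (‖h‖ - x) * Real.sqrt (‖h‖ - x)) h
      = cfc (fun x : ℝ => ‖h‖ - x) h := by
    apply cfc_congr
    intro x hx
    have hxle : |x| ≤ ‖h‖ := by
      simpa using spectrum.norm_le_norm_of_mem (𝕜 := ℝ) hx
    exact Real.mul_self_sqrt (by cases' abs_le.mp hxle with h1 h2; linarith)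
  rw [this, cfc_sub _ _ h (by fun_prop) (by fun_prop), cfc_const _ _ (by cfc_tac),
    cfc_id' ℝ h]

lemma state_algebraMap (hφ : IsState φ) (r : ℝ) : φ (algebraMap ℝ A r) = (r : ℂ) := by
  rw [Algebra.algebraMap_eq_smul_one, ← Complex.coe_smul, map_smul, hφ.2, smul_eq_mul, mul_one]

lemma state_selfAdjoint (hφ : IsState φ) {h : A} (hh : IsSelfAdjoint h) :
    (φ h).im = 0 ∧ (φ h).re ≤ ‖h‖ := by
  obtain ⟨c, hc⟩ := exists_sq h hh
  have h1 : 0 ≤ φ (algebraMap ℝ A ‖h‖ - h) := hc ▸ hφ.1 c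
  rw [map_sub, state_algebraMap hφ, Complex.nonneg_iff] at h1
  constructor
  · simpa using h1.2.symm
  · have := h1.1; simp at this; linarith

set_option linter.unusedSectionVars false

lemma state_star (hφ : IsState φ) (x : A) : φ (star x) = starRingEnd ℂ (φ x) := by
  obtain ⟨h, hh⟩ : ∃ h : A, h = (2 : ℂ)⁻¹ • (x + star x) := ⟨_, rfl⟩
  obtain ⟨k, hk⟩ : ∃ k : A, k = (Complex.I * 2)⁻¹ • (x - star x) := ⟨_, rfl⟩
  have hsh : IsSelfAdjoint h := by
    rw [IsSelfAdjoint, hh, star_smul, star_add, star_star, add_comm]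
    simp
  have hsk : IsSelfAdjoint k := by
    rw [IsSelfAdjoint, hk, star_smul, star_sub, star_star]
    rw [show star (Complex.I * 2)⁻¹ = -(Complex.I * 2)⁻¹ by simp [Complex.ext_iff]]
    rw [neg_smul, smul_sub, smul_sub]
    abel
  have hI : Complex.I * (Complex.I * 2)⁻¹ = (2:ℂ)⁻¹ := by
    rw [mul_inv, ← mul_assoc, mul_inv_cancel₀ Complex.I_ne_zero, one_mul]
  have hx : x = h + Complex.I • k := by
    rw [hh, hk, smul_smul, hI, ← smul_add]
    match_scalars <;> ring
  have hsx : star x = h - Complex.I • k := by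
    rw [hh, hk, smul_smul, hI, ← smul_sub]
    match_scalars <;> ring
  have h1 := (state_selfAdjoint hφ hsh).1
  have h2 := (state_selfAdjoint hφ hsk).1
  rw [hsx, map_sub, map_smul]
  conv_rhs => rw [hx]
  rw [map_add, map_smul]
  apply Complex.ext <;>
    simp [Complex.conj_re, Complex.conj_im, h1, h2, Complex.mul_re, Complex.mul_im]

lemma state_real (hφ : IsState φ) (x : A) :
    φ (star x * x) = ((φ (star x * x)).re : ℂ) ∧ 0 ≤ (φ (star x * x)).re ∧
      (φ (star x * x)).re ≤ ‖x‖ ^ 2 := by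
  have h0 := hφ.1 x
  rw [Complex.nonneg_iff] at h0
  have hsa : IsSelfAdjoint (star x * x) := by
    rw [IsSelfAdjoint, star_mul, star_star]
  have := (state_selfAdjoint hφ hsa).2
  refine ⟨Complex.ext rfl (by simp [h0.2.symm]), h0.1, ?_⟩
  calc (φ (star x * x)).re ≤ ‖star x * x‖ := this
    _ = ‖x‖ ^ 2 := by rw [CStarRing.norm_star_mul_self]; ring

lemma state_cs (hφ : IsState φ) (x y : A) :
    ‖φ (star x * y)‖ ^ 2 ≤ (φ (star x * x)).re * (φ (star y * y)).re := by
  by_cases hc : φ (star x * y) = 0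
  · rw [hc]
    simpa using mul_nonneg (state_real hφ x).2.1 (state_real hφ y).2.1
  · obtain ⟨c, hcdef⟩ : ∃ c : ℂ, c = φ (star x * y) := ⟨_, rfl⟩
    obtain ⟨w, hw⟩ : ∃ w : A, w = (c / (‖c‖ : ℂ)) • x := ⟨_, rfl⟩
    have hμ : star (c / (‖c‖ : ℂ)) * c = (‖c‖ : ℂ) := by
      rw [Complex.star_def, map_div₀, Complex.conj_ofReal, div_mul_eq_mul_div, mul_comm,
        Complex.mul_conj, Complex.normSq_eq_norm_sq]
      push_cast
      rw [sq]
      field_simp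
    have hμ2 : star (c / (‖c‖ : ℂ)) * (c / (‖c‖ : ℂ)) = 1 := by
      have habs : (‖c‖ : ℝ) ≠ 0 := by simpa [hcdef] using hc
      rw [mul_div_assoc', hμ]
      rw [div_self (by exact_mod_cast habs)]
    have hw1 : φ (star w * y) = ((‖c‖) : ℂ) := by
      rw [hw, star_smul, smul_mul_assoc, map_smul, smul_eq_mul, ← hcdef, hμ]
    have hw2 : φ (star y * w) = ((‖c‖) : ℂ) := by
      have h : star (star w * y) = star y * w := by rw [star_mul, star_star]
      rw [← h, state_star hφ, hw1, Complex.conj_ofReal]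
    have hw3 : φ (star w * w) = φ (star x * x) := by
      rw [hw, star_smul, smul_mul_assoc, mul_smul_comm, map_smul, map_smul, smul_smul,
        smul_eq_mul, hμ2, one_mul]
    have key : ∀ t : ℝ, 0 ≤ (φ (star x * x)).re * (t * t) +
        (-(2 * ‖c‖)) * t + (φ (star y * y)).re := by
      intro t
      have h0 := hφ.1 ((t : ℂ) • w - y)
      have hexp : φ (star ((t : ℂ) • w - y) * ((t : ℂ) • w - y)) =
          (t : ℂ) ^ 2 * φ (star w * w) - (t : ℂ) * φ (star w * y)
            - (t : ℂ) * φ (star y * w) + φ (star y * y) := by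
        simp only [star_sub, star_smul, Complex.star_def, Complex.conj_ofReal, sub_mul,
          mul_sub, smul_mul_assoc, mul_smul_comm, map_sub, map_smul, smul_eq_mul]
        ring
      rw [hexp, hw1, hw2, hw3] at h0
      rw [Complex.nonneg_iff] at h0
      have h1 := h0.1
      rw [(state_real hφ x).1, (state_real hφ y).1] at h1
      simp only [← Complex.ofReal_pow, Complex.add_re, Complex.sub_re, Complex.mul_re,
        Complex.ofReal_re, Complex.ofReal_im] at h1
      nlinarith [h1]
    have hd := discrim_le_zero key
    rw [discrim] at hd
    rw [← hcdef]
    nlinarith [(state_real hφ x).2.1, (state_real hφ y).2.1, hd]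

lemma state_buzano (hφ : IsState φ) (α : ℂ) (u v : A) :
    ‖α * (starRingEnd ℂ (φ u)) * φ v - φ (star u * v)‖ ≤
      max 1 (‖α - 1‖) *
        (Real.sqrt ((φ (star u * u)).re) * Real.sqrt ((φ (star v * v)).re)) := by
  obtain ⟨u', hu'⟩ : ∃ w : A, w = u - φ u • 1 := ⟨_, rfl⟩
  obtain ⟨v', hv'⟩ : ∃ w : A, w = v - φ v • 1 := ⟨_, rfl⟩
  have hin : ∀ p q : A, φ (star (p - φ p • 1) * (q - φ q • 1)) =
      φ (star p * q) - starRingEnd ℂ (φ p) * φ q := by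
    intro p q
    simp only [star_sub, star_smul, star_one, sub_mul, mul_sub, smul_mul_assoc, mul_smul_comm,
      one_mul, mul_one, map_sub, map_smul, smul_eq_mul, Complex.star_def, hφ.2]
    rw [state_star hφ]
    ring
  have key : α * (starRingEnd ℂ (φ u)) * φ v - φ (star u * v)
      = (α - 1) * (starRingEnd ℂ (φ u) * φ v) - φ (star u' * v') := by
    rw [hu', hv', hin u v]; ring
  rw [key]
  have hcs := state_cs hφ u' v'
  have hb2 : (φ (star u' * u')).re = Real.sqrt ((φ (star u' * u')).re) ^ 2 :=
    (Real.sq_sqrt (state_real hφ u').2.1).symm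
  have hd2 : (φ (star v' * v')).re = Real.sqrt ((φ (star v' * v')).re) ^ 2 :=
    (Real.sq_sqrt (state_real hφ v').2.1).symm
  obtain ⟨a, ha⟩ : ∃ r, r = ‖φ u‖ := ⟨_, rfl⟩
  obtain ⟨c2, hc2⟩ : ∃ r, r = ‖φ v‖ := ⟨_, rfl⟩
  obtain ⟨b, hb⟩ : ∃ r, r = Real.sqrt ((φ (star u' * u')).re) := ⟨_, rfl⟩
  obtain ⟨d, hd⟩ : ∃ r, r = Real.sqrt ((φ (star v' * v')).re) := ⟨_, rfl⟩
  have hb0 : 0 ≤ b := hb ▸ Real.sqrt_nonneg _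
  have hd0 : 0 ≤ d := hd ▸ Real.sqrt_nonneg _
  have ha0 : 0 ≤ a := ha ▸ norm_nonneg _
  have hc20 : 0 ≤ c2 := hc2 ▸ norm_nonneg _
  have habs : ‖φ (star u' * v')‖ ≤ b * d := by
    have h2 : ‖φ (star u' * v')‖ ^ 2 ≤ (b * d) ^ 2 := by
      rw [mul_pow, hb, hd, ← hb2, ← hd2]; exact hcs
    calc ‖φ (star u' * v')‖
        = Real.sqrt (‖φ (star u' * v')‖ ^ 2) :=
          (Real.sqrt_sq (norm_nonneg _)).symm
      _ ≤ Real.sqrt ((b * d) ^ 2) := Real.sqrt_le_sqrt h2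
      _ = b * d := Real.sqrt_sq (mul_nonneg hb0 hd0)
  have hpyth : ∀ p p' : A, p' = p - φ p • 1 →
      Real.sqrt ((φ (star p * p)).re) = Real.sqrt (‖φ p‖ ^ 2 +
        (φ (star p' * p')).re) := by
    intro p p' hp
    congr 1
    have h := hin p p
    rw [← hp] at h
    have : starRingEnd ℂ (φ p) * φ p = ((‖φ p‖ ^ 2 : ℝ) : ℂ) := by
      rw [mul_comm, Complex.mul_conj, Complex.normSq_eq_norm_sq]
    rw [this] at h
    have := congrArg Complex.re h
    simp only [Complex.sub_re, Complex.ofReal_re] at this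
    linarith
  have hPu := hpyth u u' hu'
  have hPv := hpyth v v' hv'
  have hb2' : (φ (star u' * u')).re = b ^ 2 := by rw [hb]; exact hb2
  have hd2' : (φ (star v' * v')).re = d ^ 2 := by rw [hd]; exact hd2
  rw [hPu, hPv, ← ha, ← hc2, hb2', hd2']
  have hM1 : (1:ℝ) ≤ max 1 (‖α - 1‖) := le_max_left _ _
  have hM2 : ‖α - 1‖ ≤ max 1 (‖α - 1‖) := le_max_right _ _
  have h2dcs : a * c2 + b * d ≤ Real.sqrt (a^2 + b^2) * Real.sqrt (c2^2 + d^2) := by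
    have h2 : (a * c2 + b * d)^2 ≤ (a^2 + b^2) * (c2^2 + d^2) := by
      nlinarith [sq_nonneg (a * d - b * c2)]
    calc a * c2 + b * d = Real.sqrt ((a * c2 + b * d)^2) :=
          (Real.sqrt_sq (by positivity)).symm
      _ ≤ Real.sqrt ((a^2 + b^2) * (c2^2 + d^2)) := Real.sqrt_le_sqrt h2
      _ = _ := Real.sqrt_mul (by positivity) _
  calc ‖(α - 1) * (starRingEnd ℂ (φ u) * φ v) - φ (star u' * v')‖
      ≤ ‖(α - 1) * (starRingEnd ℂ (φ u) * φ v)‖ +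
          ‖φ (star u' * v')‖ := norm_sub_le _ _
    _ ≤ ‖α - 1‖ * (a * c2) + b * d := by
        rw [norm_mul, norm_mul, Complex.norm_conj, ha, hc2]
        exact add_le_add le_rfl habs
    _ ≤ max 1 (‖α - 1‖) * (a * c2) + max 1 (‖α - 1‖) * (b * d) := by
        have g1 := mul_le_mul_of_nonneg_right hM2 (mul_nonneg ha0 hc20)
        have g2 : b * d ≤ max 1 (‖α - 1‖) * (b * d) := by
          nlinarith [mul_nonneg hb0 hd0]
        linarith
    _ = max 1 (‖α - 1‖) * (a * c2 + b * d) := by ring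
    _ ≤ _ := by
        have := mul_le_mul_of_nonneg_left h2dcs (le_trans zero_le_one hM1)
        linarith

lemma sqrt_state_le (hφ : IsState φ) (x : A) : Real.sqrt ((φ (star x * x)).re) ≤ ‖x‖ := by
  calc Real.sqrt ((φ (star x * x)).re) ≤ Real.sqrt (‖x‖ ^ 2) :=
        Real.sqrt_le_sqrt (state_real hφ x).2.2
    _ = ‖x‖ := Real.sqrt_sq (norm_nonneg _)

lemma state_cs_one (hφ : IsState φ) (x : A) :
    ‖φ x‖ ^ 2 ≤ (φ (star x * x)).re := by
  have h := state_cs hφ 1 x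
  simpa [hφ.2] using h

lemma state_key1 (hφ : IsState φ) (a : A) (α : ℂ) :
    ‖α‖ * ‖φ a‖ ^ 3 ≤
      max 1 (‖α - 1‖) * ‖a‖ ^ 3 + ‖φ (star a * a ^ 2)‖ := by
  have hbuz := state_buzano hφ α (star a * a) a
  have hsa : star (star a * a) = star a * a := by rw [star_mul, star_star]
  rw [hsa] at hbuz
  obtain ⟨hre, hnn, _⟩ := state_real hφ a
  have hconj : starRingEnd ℂ (φ (star a * a)) = φ (star a * a) := by
    rw [hre, Complex.conj_ofReal]
  rw [hconj] at hbuz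
  have hassoc : star a * a * a = star a * a ^ 2 := by rw [pow_two, mul_assoc]
  rw [hassoc] at hbuz
  have hsq1 : Real.sqrt ((φ (star a * a * (star a * a))).re) ≤ ‖a‖ ^ 2 := by
    have h := sqrt_state_le hφ (star a * a)
    rw [hsa] at h
    calc Real.sqrt ((φ (star a * a * (star a * a))).re) ≤ ‖star a * a‖ := h
      _ = ‖a‖ ^ 2 := by rw [CStarRing.norm_star_mul_self]; ring
  have hsq2 : Real.sqrt ((φ (star a * a)).re) ≤ ‖a‖ := sqrt_state_le hφ a
  have hcs := state_cs_one hφ a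
  have habs : ‖α * φ (star a * a) * φ a‖
      = ‖α‖ * ((φ (star a * a)).re * ‖φ a‖) := by
    rw [norm_mul, norm_mul, hre, Complex.norm_real, Real.norm_of_nonneg hnn, Complex.ofReal_re]
    ring
  have htri : ‖α * φ (star a * a) * φ a‖ ≤
      ‖α * φ (star a * a) * φ a - φ (star a * a ^ 2)‖ +
        ‖φ (star a * a ^ 2)‖ := by
    have := norm_sub_norm_le (α * φ (star a * a) * φ a) (φ (star a * a ^ 2))
    linarith
  have hM0 : (0:ℝ) ≤ max 1 (‖α - 1‖) := le_trans zero_le_one (le_max_left _ _)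
  have hrhs : max 1 (‖α - 1‖) *
      (Real.sqrt ((φ (star a * a * (star a * a))).re) * Real.sqrt ((φ (star a * a)).re)) ≤
        max 1 (‖α - 1‖) * ‖a‖ ^ 3 := by
    apply mul_le_mul_of_nonneg_left _ hM0
    calc Real.sqrt ((φ (star a * a * (star a * a))).re) * Real.sqrt ((φ (star a * a)).re)
        ≤ ‖a‖ ^ 2 * ‖a‖ :=
          mul_le_mul hsq1 hsq2 (Real.sqrt_nonneg _) (by positivity)
      _ = ‖a‖ ^ 3 := by ring
  have h1 : ‖α‖ * ‖φ a‖ ^ 3 ≤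
      ‖α‖ * ((φ (star a * a)).re * ‖φ a‖) := by
    nlinarith [mul_nonneg (mul_nonneg (norm_nonneg α) (norm_nonneg (φ a)))
      (sub_nonneg.mpr hcs)]
  calc ‖α‖ * ‖φ a‖ ^ 3
      ≤ ‖α‖ * ((φ (star a * a)).re * ‖φ a‖) := h1
    _ = ‖α * φ (star a * a) * φ a‖ := habs.symm
    _ ≤ ‖α * φ (star a * a) * φ a - φ (star a * a ^ 2)‖ +
        ‖φ (star a * a ^ 2)‖ := htri
    _ ≤ max 1 (‖α - 1‖) * ‖a‖ ^ 3 + ‖φ (star a * a ^ 2)‖ := by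
        have := le_trans hbuz hrhs
        linarith

lemma state_key2 (hφ : IsState φ) (a : A) (α : ℂ) :
    ‖α‖ * ‖φ a‖ ^ 3 ≤
      max 1 (‖α - 1‖) * ‖a‖ ^ 3 + ‖φ (a ^ 2 * star a)‖ := by
  have hbuz := state_buzano hφ α (star a) (a * star a)
  rw [star_star] at hbuz
  have hsa : star (a * star a) = a * star a := by rw [star_mul, star_star]
  rw [hsa] at hbuz
  have hassoc : a * (a * star a) = a ^ 2 * star a := by rw [pow_two, mul_assoc]
  rw [hassoc] at hbuz
  rw [state_star hφ, Complex.conj_conj] at hbuz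
  obtain ⟨hre, hnn, hle⟩ := state_real hφ (star a)
  rw [star_star] at hre hnn hle
  have hcs : ‖φ a‖ ^ 2 ≤ (φ (a * star a)).re := by
    have h := state_cs_one hφ (star a)
    rw [star_star, state_star hφ, Complex.norm_conj] at h
    exact h
  have hsq1 : Real.sqrt ((φ (a * star a)).re) ≤ ‖a‖ := by
    have h := sqrt_state_le hφ (star a)
    rw [star_star, norm_star] at h
    exact h
  have hsq2 : Real.sqrt ((φ (a * star a * (a * star a))).re) ≤ ‖a‖ ^ 2 := by
    have h := sqrt_state_le hφ (a * star a)
    rw [hsa] at h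
    calc Real.sqrt ((φ (a * star a * (a * star a))).re) ≤ ‖a * star a‖ := h
      _ = ‖a‖ ^ 2 := by rw [CStarRing.norm_self_mul_star]; ring
  have habs : ‖α * φ a * φ (a * star a)‖
      = ‖α‖ * (‖φ a‖ * (φ (a * star a)).re) := by
    rw [norm_mul, norm_mul, hre, Complex.norm_real, Real.norm_of_nonneg hnn, Complex.ofReal_re]
    ring
  have htri : ‖α * φ a * φ (a * star a)‖ ≤
      ‖α * φ a * φ (a * star a) - φ (a ^ 2 * star a)‖ +
        ‖φ (a ^ 2 * star a)‖ := by
    have := norm_sub_norm_le (α * φ a * φ (a * star a)) (φ (a ^ 2 * star a))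
    linarith
  have hM0 : (0:ℝ) ≤ max 1 (‖α - 1‖) := le_trans zero_le_one (le_max_left _ _)
  have hrhs : max 1 (‖α - 1‖) *
      (Real.sqrt ((φ (a * star a)).re) * Real.sqrt ((φ (a * star a * (a * star a))).re)) ≤
        max 1 (‖α - 1‖) * ‖a‖ ^ 3 := by
    apply mul_le_mul_of_nonneg_left _ hM0
    calc Real.sqrt ((φ (a * star a)).re) * Real.sqrt ((φ (a * star a * (a * star a))).re)
        ≤ ‖a‖ * ‖a‖ ^ 2 := mul_le_mul hsq1 hsq2 (Real.sqrt_nonneg _) (norm_nonneg _)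
      _ = ‖a‖ ^ 3 := by ring
  have h1 : ‖α‖ * ‖φ a‖ ^ 3 ≤
      ‖α‖ * (‖φ a‖ * (φ (a * star a)).re) := by
    nlinarith [mul_nonneg (mul_nonneg (norm_nonneg α) (norm_nonneg (φ a)))
      (sub_nonneg.mpr hcs)]
  calc ‖α‖ * ‖φ a‖ ^ 3
      ≤ ‖α‖ * (‖φ a‖ * (φ (a * star a)).re) := h1
    _ = ‖α * φ a * φ (a * star a)‖ := habs.symm
    _ ≤ ‖α * φ a * φ (a * star a) - φ (a ^ 2 * star a)‖ +
        ‖φ (a ^ 2 * star a)‖ := htri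
    _ ≤ max 1 (‖α - 1‖) * ‖a‖ ^ 3 + ‖φ (a ^ 2 * star a)‖ := by
        have := le_trans hbuz hrhs
        linarith

lemma state_abs_le (hφ : IsState φ) (b : A) : ‖φ b‖ ≤ ‖b‖ := by
  have h1 := state_cs_one hφ b
  have h2 := (state_real hφ b).2.2
  nlinarith [norm_nonneg (φ b), norm_nonneg b]


end Helpers

/-- Theorem 2.16: for every nonzero `α ∈ ℂ`,
`v(a)³ ≤ (1/|α|)·(max{1,|α−1|}·‖a‖³ + min{v(a*a²), v(a²a*)})`. -/
theorem numRadius_cube_le_min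
    {A : Type*} [CStarAlgebra A] (a : A) (α : ℂ) (hα : α ≠ 0) :
    numRadius a ^ 3 ≤
      (1 / ‖α‖) *
        (max 1 (‖α - 1‖) * ‖a‖ ^ 3
          + min (numRadius (star a * a ^ 2)) (numRadius (a ^ 2 * star a))) := by
  have hM0 : (0:ℝ) ≤ max 1 (‖α - 1‖) := le_trans zero_le_one (le_max_left _ _)
  by_cases hex : ∃ ψ : A →ₗ[ℂ] ℂ, IsState ψ
  · obtain ⟨ψ, hψ⟩ := hex
    haveI : Nontrivial A := by
      refine nontrivial_of_ne 1 0 fun h => ?_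
      have := hψ.2
      rw [h, map_zero] at this
      exact one_ne_zero this.symm
    have hαpos : 0 < ‖α‖ := norm_pos_iff.mpr hα
    -- bounded above
    have hbdd : ∀ b : A, BddAbove {r : ℝ | ∃ φ : A →ₗ[ℂ] ℂ, IsState φ ∧ r = ‖φ b‖} := by
      intro b
      refine ⟨‖b‖, fun r hr => ?_⟩
      obtain ⟨φ', hφ', rfl⟩ := hr
      exact state_abs_le hφ' b
    have hmem : ∀ b : A, ∀ φ' : A →ₗ[ℂ] ℂ, IsState φ' →
        ‖φ' b‖ ≤ numRadius b := fun b φ' hφ' =>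
      le_csSup (hbdd b) ⟨φ', hφ', rfl⟩
    have hv0 : ∀ b : A, 0 ≤ numRadius b := fun b =>
      le_trans (norm_nonneg (ψ b)) (hmem b ψ hψ)
    obtain ⟨C, hC⟩ : ∃ C : ℝ, C = (1 / ‖α‖) *
        (max 1 (‖α - 1‖) * ‖a‖ ^ 3
          + min (numRadius (star a * a ^ 2)) (numRadius (a ^ 2 * star a))) := ⟨_, rfl⟩
    have hC0 : 0 ≤ C := by
      rw [hC]
      have := hv0 (star a * a ^ 2)
      have := hv0 (a ^ 2 * star a)
      have : (0:ℝ) ≤ min (numRadius (star a * a ^ 2)) (numRadius (a ^ 2 * star a)) := by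
        simp only [le_min_iff]; exact ⟨hv0 _, hv0 _⟩
      positivity
    have hkey : ∀ r ∈ {r : ℝ | ∃ φ' : A →ₗ[ℂ] ℂ, IsState φ' ∧ r = ‖φ' a‖},
        r ^ 3 ≤ C := by
      rintro r ⟨φ', hφ', rfl⟩
      have h1 := state_key1 hφ' a α
      have h2 := state_key2 hφ' a α
      have hm1 := hmem (star a * a ^ 2) φ' hφ'
      have hm2 := hmem (a ^ 2 * star a) φ' hφ'
      have hmin : ‖α‖ * ‖φ' a‖ ^ 3 ≤
          max 1 (‖α - 1‖) * ‖a‖ ^ 3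
            + min (numRadius (star a * a ^ 2)) (numRadius (a ^ 2 * star a)) := by
        rcases min_cases (numRadius (star a * a ^ 2)) (numRadius (a ^ 2 * star a)) with
          ⟨hmeq, _⟩ | ⟨hmeq, _⟩ <;> rw [hmeq] <;> linarith
      rw [hC, one_div, inv_mul_eq_div, le_div_iff₀ hαpos]
      linarith
    have hne : {r : ℝ | ∃ φ' : A →ₗ[ℂ] ℂ, IsState φ' ∧ r = ‖φ' a‖}.Nonempty :=
      ⟨_, ψ, hψ, rfl⟩
    have hsup0 : 0 ≤ numRadius a := hv0 a
    have hsup : numRadius a ≤ C ^ ((3:ℝ)⁻¹) := by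
      apply csSup_le hne
      intro r hr
      obtain ⟨φ', hφ', rfl⟩ := hr
      have hr3 := hkey _ ⟨φ', hφ', rfl⟩
      have hr0 : (0:ℝ) ≤ ‖φ' a‖ := norm_nonneg _
      calc ‖φ' a‖
          = ((‖φ' a‖) ^ (3:ℕ)) ^ ((3:ℝ)⁻¹) := by
            rw [← Real.rpow_natCast (‖φ' a‖) 3, ← Real.rpow_mul hr0]
            norm_num
        _ ≤ C ^ ((3:ℝ)⁻¹) := Real.rpow_le_rpow (pow_nonneg hr0 3) hr3 (by norm_num)
    calc numRadius a ^ 3 ≤ (C ^ ((3:ℝ)⁻¹)) ^ (3:ℕ) := pow_le_pow_left₀ hsup0 hsup 3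
      _ = C := by
          rw [← Real.rpow_natCast (C ^ ((3:ℝ)⁻¹)) 3, ← Real.rpow_mul hC0]
          norm_num
      _ = _ := hC
  · have hempty : ∀ b : A, {r : ℝ | ∃ φ' : A →ₗ[ℂ] ℂ, IsState φ' ∧ r = ‖φ' b‖} = ∅ := by
      intro b
      ext r
      simp only [Set.mem_setOf_eq, Set.mem_empty_iff_false, iff_false, not_exists]
      intro φ' h
      exact hex ⟨φ', h.1⟩
    have h0 : ∀ b : A, numRadius b = 0 := fun b => by
      rw [numRadius, hempty b, Real.sSup_empty]
    rw [h0, h0, h0]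
    simp only [min_self, add_zero]
    have : (0:ℝ) ≤ 1 / ‖α‖ := by positivity
    have : (0:ℝ) ≤ ‖a‖ ^ 3 := by positivity
    norm_num
    positivity
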